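/- Let δ ∈ [0,1) and α > −δ, and define p_s = ((1−δ)/(α+1)) · ∏_{l=1}^{s} (α+δl)/(α+δl+1) for s ∈ ℕ. Then for every N ∈ ℕ, 1 − ∑_{s=0}^{N} p_s = ∏_{l=0}^{N} (α+δl+δ)/(α+δl+1). -/

import Mathlib

/-- For `δ ∈ [0,1)` and `α > -δ`, with
`p s = ((1-δ)/(α+1)) ∏_{l=1}^s (α+δl)/(α+δl+1)`, one has for every `N`
`1 - ∑_{s=0}^N p s = ∏_{l=0}^N (α+δl+δ)/(α+δl+1)`. -/
theorem expected_remaining_mass_below_scale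
    (δ α : ℝ) (hδ0 : 0 ≤ δ) (hδ1 : δ < 1) (hα : -δ < α) (N : ℕ) :
    1 - ∑ s ∈ Finset.range (N + 1),
          (1 - δ) / (α + 1) * ∏ l ∈ Finset.Icc 1 s, (α + δ * l) / (α + δ * l + 1)
      = ∏ l ∈ Finset.range (N + 1), (α + δ * l + δ) / (α + δ * l + 1) := by
  have hpos : ∀ n : ℕ, 0 < α + δ * n + 1 := by
    intro n
    have : 0 ≤ δ * n := by positivity
    linarith
  have key : ∀ n : ℕ,
      (1 - δ) / (α + 1) * ∏ l ∈ Finset.Icc 1 n, (α + δ * l) / (α + δ * l + 1)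
      = (1 - δ) / (α + δ * n + 1) *
          ∏ l ∈ Finset.range n, (α + δ * l + δ) / (α + δ * l + 1) := by
    intro n
    induction n with
    | zero => simp
    | succ m ih =>
      rw [Finset.prod_Icc_succ_top (by omega), ← mul_assoc, ih,
        Finset.prod_range_succ]
      have h1 := (hpos m).ne'
      have h2 := (hpos (m + 1)).ne'
      push_cast at h1 h2 ⊢
      field_simp
      ring
  induction N with
  | zero =>
    have h0 := (hpos 0).ne'
    simp only [zero_add, Finset.sum_range_one, Finset.prod_range_one,
      Finset.Icc_eq_empty (by omega : ¬(1:ℕ) ≤ 0), Finset.prod_empty,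
      Nat.cast_zero, mul_zero, mul_one] at h0 ⊢
    have h0' : α + 1 ≠ 0 := by intro h; exact h0 (by linarith)
    field_simp
    ring
  | succ M ih =>
    rw [Finset.sum_range_succ, Finset.prod_range_succ, key (M + 1)]
    have h2 := (hpos (M + 1)).ne'
    set Q := ∏ l ∈ Finset.range (M + 1), (α + δ * l + δ) / (α + δ * l + 1) with hQ
    have hr : Q * ((α + δ * ((M : ℝ) + 1) + δ) / (α + δ * ((M : ℝ) + 1) + 1))
        = Q - (1 - δ) / (α + δ * ((M : ℝ) + 1) + 1) * Q := by
      push_cast at h2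
      field_simp
      ring
    push_cast at hr ⊢
    linarith [ih, hr]
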